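/- Let G be a finite group and χ an irreducible character with χ(1) = m(G) induced from a character β of a subgroup H with β(1) > 1. Then |G:H| < m(G), and hence (1_H)^G is a sum of linear characters and G' ≤ H. -/

import Mathlib

open scoped BigOperators
open CategoryTheory

noncomputable section

/-- `χ : G → ℂ` is the character of some finite-dimensional complex representation. -/
def IsChar (G : Type) [Group G] (χ : G → ℂ) : Prop :=
  ∃ V : FDRep ℂ G, χ = V.character

/-- `χ : G → ℂ` is the character of an irreducible (simple) finite-dimensional
complex representation. -/
def IsIrrChar (G : Type) [Group G] (χ : G → ℂ) : Prop :=
  ∃ V : FDRep ℂ G, Simple V ∧ χ = V.character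

/-- The minimal degree `m(G)` of a non-linear irreducible complex character of `G`. -/
def minDeg (G : Type) [Group G] : ℕ :=
  sInf {n : ℕ | 1 < n ∧ ∃ χ : G → ℂ, IsIrrChar G χ ∧ χ 1 = (n : ℂ)}

/-- The kernel of a character, as a set: `{g | χ g = χ 1}`. -/
def charKerSet {G : Type} [Group G] (χ : G → ℂ) : Set G := {g | χ g = χ 1}

/-- The kernel of (the representation affording) a character, as a subgroup. -/
def repKer {G : Type} [Group G] (V : FDRep ℂ G) : Subgroup G :=
  (Representation.asGroupHom V.ρ).ker

instance {G : Type} [Group G] (V : FDRep ℂ G) : (repKer V).Normal :=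
  (Representation.asGroupHom V.ρ).normal_ker

open Classical in
/-- The character of `G` induced from the class function `β` of the subgroup `H`. -/
def indChar {G : Type} [Group G] [Fintype G] (H : Subgroup G) (β : H → ℂ) : G → ℂ :=
  fun g => (Nat.card H : ℂ)⁻¹ *
    ∑ x : G, if h : x⁻¹ * g * x ∈ H then β ⟨x⁻¹ * g * x, h⟩ else 0

/-- A character of `G` is primitive if it is not induced from a character
of a proper subgroup. -/
def IsPrimitiveChar (G : Type) [Group G] [Fintype G] (χ : G → ℂ) : Prop :=
  ∀ H : Subgroup G, H ≠ ⊤ → ∀ β : H → ℂ, IsChar H β → indChar H β ≠ χ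

/-- The usual inner product of class functions. -/
def charInner (G : Type) [Group G] [Fintype G] (φ ψ : G → ℂ) : ℂ :=
  (Nat.card G : ℂ)⁻¹ * ∑ g : G, φ g * (starRingEnd ℂ) (ψ g)

/-- `χ` is a sum of linear characters of `G`. -/
def IsSumOfLinear (G : Type) [Group G] (χ : G → ℂ) : Prop :=
  ∃ s : Multiset (G → ℂ), (∀ β ∈ s, IsChar G β ∧ β 1 = 1) ∧ χ = s.sum

/-- The Fitting subgroup: the join of all nilpotent normal subgroups. -/
def fittingSubgroup (G : Type) [Group G] : Subgroup G :=
  ⨆ (N : Subgroup G) (_ : N.Normal) (_ : Group.IsNilpotent N), N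

/-- `O_p(G)`: the join of all normal `p`-subgroups. -/
def pCore (p : ℕ) (G : Type) [Group G] : Subgroup G :=
  ⨆ (N : Subgroup G) (_ : N.Normal) (_ : IsPGroup p N), N

/-- An extraspecial `p`-group: `Z(P) = P' = Φ(P)` has order `p`. -/
def IsExtraspecial (p : ℕ) (P : Type) [Group P] : Prop :=
  IsPGroup p P ∧ Subgroup.center P = commutator P ∧
    Subgroup.center P = frattini P ∧ Nat.card (Subgroup.center P) = p

section AuxStmt19
open Module
set_option linter.unusedSectionVars false

variable {G : Type} [Group G]

def resρ (V : FDRep ℂ G) (p : Submodule ℂ V) (hp : ∀ g : G, ∀ x ∈ p, V.ρ g x ∈ p) :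
    Representation ℂ G p where
  toFun g := (V.ρ g).restrict (hp g)
  map_one' := by ext x; simp [LinearMap.restrict_apply]
  map_mul' g h := by ext x; simp [LinearMap.restrict_apply]

lemma resρ_apply (V : FDRep ℂ G) (p : Submodule ℂ V) (hp : ∀ g : G, ∀ x ∈ p, V.ρ g x ∈ p)
    (g : G) (x : p) : (resρ V p hp g x : V) = V.ρ g x := rfl

def subFDRep (V : FDRep ℂ G) (p : Submodule ℂ V) (hp : ∀ g : G, ∀ x ∈ p, V.ρ g x ∈ p) :
    FDRep ℂ G := FDRep.of (resρ V p hp)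

lemma subFDRep_char (V : FDRep ℂ G) (p : Submodule ℂ V) (hp : ∀ g : G, ∀ x ∈ p, V.ρ g x ∈ p)
    (g : G) : (subFDRep V p hp).character g = LinearMap.trace ℂ p ((V.ρ g).restrict (hp g)) := rfl

lemma subFDRep_finrank (V : FDRep ℂ G) (p : Submodule ℂ V) (hp : ∀ g : G, ∀ x ∈ p, V.ρ g x ∈ p) :
    finrank ℂ (subFDRep V p hp) = finrank ℂ p := rfl

lemma char_isCompl (V : FDRep ℂ G) {p q : Submodule ℂ V}
    (hp : ∀ g : G, ∀ x ∈ p, V.ρ g x ∈ p) (hq : ∀ g : G, ∀ x ∈ q, V.ρ g x ∈ q)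
    (hpq : IsCompl p q) (g : G) :
    V.character g = (subFDRep V p hp).character g + (subFDRep V q hq).character g := by
  set e := Submodule.prodEquivOfIsCompl p q hpq with he
  have hmap : V.ρ g = e.conj ((resρ V p hp g).prodMap (resρ V q hq g)) := by
    apply LinearMap.ext; intro v
    simp only [LinearEquiv.conj_apply, LinearMap.comp_apply, LinearEquiv.coe_coe]
    conv_lhs => rw [← e.apply_symm_apply v]
    generalize e.symm v = z
    obtain ⟨a, b⟩ := z
    have h1 : e (a, b) = (a : V) + b := rfl
    have h2 : (e ((resρ V p hp g).prodMap (resρ V q hq g) (a, b)) : V)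
        = V.ρ g a + V.ρ g b := rfl
    rw [h1, map_add, h2]
  show LinearMap.trace ℂ V (V.ρ g) = _
  rw [hmap, LinearMap.trace_conj', LinearMap.trace_prodMap']
  rfl

/-- Maschke: invariant complement -/
lemma exists_invariant_compl [Fintype G] (V : FDRep ℂ G) (p : Submodule ℂ V)
    (hp : ∀ g : G, ∀ x ∈ p, V.ρ g x ∈ p) :
    ∃ q : Submodule ℂ V, (∀ g : G, ∀ x ∈ q, V.ρ g x ∈ q) ∧ IsCompl p q := by
  obtain ⟨q0, hq0⟩ := Submodule.exists_isCompl p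
  set π0 : V →ₗ[ℂ] p := p.linearProjOfIsCompl q0 hq0 with hπ0
  set π : V →ₗ[ℂ] p :=
    (Fintype.card G : ℂ)⁻¹ • ∑ g : G, (resρ V p hp g⁻¹ ∘ₗ π0 ∘ₗ V.ρ g) with hπ
  have hcard : (Fintype.card G : ℂ) ≠ 0 := Nat.cast_ne_zero.mpr Fintype.card_ne_zero
  have hproj : ∀ x : p, π (x : V) = x := by
    intro x
    have hterm : ∀ g : G, (resρ V p hp g⁻¹ ∘ₗ π0 ∘ₗ V.ρ g) (x : V) = x := by
      intro g
      have hx : V.ρ g (x : V) ∈ p := hp g x x.2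
      have h1 : π0 (V.ρ g (x : V)) = ⟨V.ρ g (x : V), hx⟩ :=
        Submodule.linearProjOfIsCompl_apply_left hq0 ⟨V.ρ g (x : V), hx⟩
      ext
      simp only [LinearMap.comp_apply, h1, resρ_apply]
      rw [← Module.End.mul_apply, ← map_mul, inv_mul_cancel, map_one, Module.End.one_apply]
    have : π (x : V) = (Fintype.card G : ℂ)⁻¹ • ∑ g : G, (resρ V p hp g⁻¹ ∘ₗ π0 ∘ₗ V.ρ g) (x : V) := by
      rw [hπ]; simp [LinearMap.sum_apply]
    rw [this]
    simp only [hterm, Finset.sum_const, Finset.card_univ]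
    rw [← Nat.cast_smul_eq_nsmul ℂ, smul_smul, inv_mul_cancel₀ hcard, one_smul]
  have hequi : ∀ (h : G) (v : V), π (V.ρ h v) = resρ V p hp h (π v) := by
    intro h v
    rw [hπ]
    simp only [LinearMap.smul_apply, LinearMap.sum_apply, LinearMap.comp_apply, map_smul,
      map_sum]
    congr 1
    refine Fintype.sum_bijective (· * h) (Group.mulRight_bijective h) _ _ fun g => ?_
    have e1 : h * (g * h)⁻¹ = g⁻¹ := by group
    rw [show V.ρ g (V.ρ h v) = V.ρ (g * h) v by rw [← Module.End.mul_apply, ← map_mul]]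
    rw [show (resρ V p hp h) ((resρ V p hp (g*h)⁻¹) (π0 (V.ρ (g*h) v)))
        = (resρ V p hp (h * (g*h)⁻¹)) (π0 (V.ρ (g*h) v)) by
      rw [← Module.End.mul_apply, ← map_mul], e1]
  refine ⟨LinearMap.ker π, ?_, LinearMap.isCompl_of_proj hproj⟩
  intro g x hx
  rw [LinearMap.mem_ker] at hx ⊢
  rw [hequi g x, hx, map_zero]

/-- inclusion morphism of a subrepresentation -/
def subInc (V : FDRep ℂ G) (p : Submodule ℂ V) (hp : ∀ g : G, ∀ x ∈ p, V.ρ g x ∈ p) :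
    subFDRep V p hp ⟶ V where
  hom := InducedCategory.homMk (ModuleCat.ofHom p.subtype)
  comm g := by
    apply FGModuleCat.hom_ext
    apply LinearMap.ext
    intro x
    rfl

lemma simple_of_irreducible (W : FDRep ℂ G) (hnz : ∃ w : W, w ≠ 0)
    (hirr : ∀ q : Submodule ℂ W, (∀ g : G, ∀ x ∈ q, W.ρ g x ∈ q) → q = ⊥ ∨ q = ⊤) :
    Simple W := by
  constructor
  intro Y f hmono
  constructor
  · intro hiso h0
    obtain ⟨w, hw⟩ := hnz
    have hf0 : f.hom = 0 := by rw [h0]; rfl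
    have h2 := congrArg (fun φ : W ⟶ W => φ.hom w) (IsIso.inv_hom_id f)
    simp only [Action.comp_hom, Action.id_hom] at h2
    rw [hf0] at h2
    simp at h2
    exact hw h2.symm
  · intro hne
    have hcomm : ∀ (g : G) (y : Y), f.hom (Y.ρ g y) = W.ρ g (f.hom y) := by
      intro g y
      have := congrArg (fun φ => φ y) (f.comm g)
      simp at this
      exact this
    -- surjectivity
    have hrinv : ∀ g : G, ∀ x ∈ LinearMap.range f.hom.hom.hom, W.ρ g x ∈ LinearMap.range f.hom.hom.hom := by
      rintro g x ⟨y, rfl⟩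
      exact ⟨Y.ρ g y, hcomm g y⟩
    have hsurj : Function.Surjective f.hom.hom.hom := by
      rcases hirr _ hrinv with h | h
      · exfalso
        apply hne
        apply Action.hom_ext
        have : f.hom.hom.hom = 0 := LinearMap.range_eq_bot.mp h
        ext y
        simpa using congrArg (fun φ => φ y) this
      · exact LinearMap.range_eq_top.mp h
    -- injectivity
    have hkinv : ∀ g : G, ∀ x ∈ LinearMap.ker f.hom.hom.hom, Y.ρ g x ∈ LinearMap.ker f.hom.hom.hom := by
      intro g x hx
      rw [LinearMap.mem_ker] at hx ⊢
      exact (hcomm g x).trans (by change W.ρ g (f.hom.hom.hom x) = 0; rw [hx, map_zero])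
    have hι : subInc Y _ hkinv ≫ f = (0 : subFDRep Y _ hkinv ⟶ W) := by
      apply Action.hom_ext
      apply FGModuleCat.hom_ext
      apply LinearMap.ext
      rintro ⟨x, hx⟩
      exact hx
    have hι0 : subInc Y _ hkinv = (0 : subFDRep Y _ hkinv ⟶ Y) := by
      have := hι.trans (Limits.zero_comp (f := f)).symm
      exact (cancel_mono f).mp this
    have hinj : Function.Injective f.hom.hom.hom := by
      rw [← LinearMap.ker_eq_bot]
      rw [Submodule.eq_bot_iff]
      intro x hx
      have : (subInc Y _ hkinv).hom ⟨x, hx⟩ = x := rfl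
      rw [hι0] at this
      exact this.symm
    set e := LinearEquiv.ofBijective f.hom.hom.hom ⟨hinj, hsurj⟩ with he
    haveI : IsIso f.hom := by
      refine ⟨InducedCategory.homMk (ModuleCat.ofHom e.symm.toLinearMap), ?_, ?_⟩
      · apply FGModuleCat.hom_ext; apply LinearMap.ext; intro y
        exact e.symm_apply_apply y
      · apply FGModuleCat.hom_ext; apply LinearMap.ext; intro w
        exact e.apply_symm_apply w
    infer_instance

lemma sumLinearAux [Fintype G] :
    ∀ (n : ℕ) (V : FDRep ℂ G), finrank ℂ V = n → n < minDeg G → IsSumOfLinear G V.character := by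
  intro n
  induction n using Nat.strong_induction_on with
  | _ n ih =>
    intro V hn hlt
    rcases Nat.eq_zero_or_pos n with h0 | hpos
    · subst h0
      refine ⟨0, by simp, ?_⟩
      haveI hsub : Subsingleton V := Module.finrank_zero_iff.mp hn
      funext g
      rw [Multiset.sum_zero]
      show LinearMap.trace ℂ V (V.ρ g) = (0 : G → ℂ) g
      have hρ : (V.ρ g) = 0 := Subsingleton.elim _ _
      rw [hρ, map_zero]
      rfl
    · haveI hnt : Nontrivial V := Module.finrank_pos_iff (R := ℂ).mp (by omega)
      set S : Set ℕ :=
        {m | ∃ p : Submodule ℂ V, (∀ g : G, ∀ x ∈ p, V.ρ g x ∈ p) ∧ p ≠ ⊥ ∧ finrank ℂ p = m}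
        with hS
      have hStop : finrank ℂ (⊤ : Submodule ℂ V) ∈ S :=
        ⟨⊤, fun g x _ => Submodule.mem_top, bot_ne_top.symm, rfl⟩
      obtain ⟨p, hpinv, hpne, hpm⟩ := Nat.sInf_mem (⟨_, hStop⟩ : S.Nonempty)
      have hmin : ∀ q : Submodule ℂ V, (∀ g : G, ∀ x ∈ q, V.ρ g x ∈ q) → q ≠ ⊥ →
          sInf S ≤ finrank ℂ q := fun q h1 h2 => Nat.sInf_le ⟨q, h1, h2, rfl⟩
      obtain ⟨q, hqinv, hpq⟩ := exists_invariant_compl V p hpinv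
      have hsum : finrank ℂ p + finrank ℂ q = n := by
        rw [← hn]; exact Submodule.finrank_add_eq_of_isCompl hpq
      have hppos : 0 < finrank ℂ p := by
        rcases Nat.eq_zero_or_pos (finrank ℂ p) with h | h
        · exact absurd (Submodule.finrank_eq_zero.mp h) hpne
        · exact h
      by_cases hp1 : finrank ℂ p = 1
      · have hqlt : finrank ℂ q < n := by omega
        have hql : finrank ℂ q < minDeg G := lt_of_le_of_lt (by omega) hlt
        obtain ⟨s, hs, hsum2⟩ := ih (finrank ℂ q) hqlt (subFDRep V q hqinv)
          (subFDRep_finrank V q hqinv) hql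
        refine ⟨(subFDRep V p hpinv).character ::ₘ s, ?_, ?_⟩
        · intro βl hβl
          rcases Multiset.mem_cons.mp hβl with h | h
          · subst h
            refine ⟨⟨subFDRep V p hpinv, rfl⟩, ?_⟩
            rw [FDRep.char_one, subFDRep_finrank V p hpinv, hp1, Nat.cast_one]
          · exact hs _ h
        · funext g
          rw [Multiset.sum_cons]
          show V.character g = ((subFDRep V p hpinv).character + s.sum) g
          rw [Pi.add_apply, char_isCompl V hpinv hqinv hpq g, ← hsum2]
      · exfalso
        have h2 : 1 < finrank ℂ p := by omega
        have hsimple : Simple (subFDRep V p hpinv) := by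
          apply simple_of_irreducible
          · haveI : Nontrivial p := Module.finrank_pos_iff (R := ℂ).mp (by omega)
            obtain ⟨x, y, hxy⟩ := exists_pair_ne p
            exact ⟨x - y, sub_ne_zero.mpr hxy⟩
          · intro q' hq'inv
            set q'' := q'.map p.subtype with hq''
            have hq''inv : ∀ g : G, ∀ x ∈ q'', V.ρ g x ∈ q'' := by
              rintro g x ⟨y, hy, rfl⟩
              exact ⟨resρ V p hpinv g y, hq'inv g y hy, rfl⟩
            have hq''le : q'' ≤ p := Submodule.map_subtype_le p q'
            rcases eq_or_ne q'' ⊥ with hb | hnb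
            · left
              apply Submodule.map_injective_of_injective p.injective_subtype
              exact hb.trans (Submodule.map_bot _).symm
            · right
              have hge : sInf S ≤ finrank ℂ q'' := hmin q'' hq''inv hnb
              have hle : finrank ℂ q'' ≤ finrank ℂ p := Submodule.finrank_mono hq''le
              have heq : q'' = p := Submodule.eq_of_le_of_finrank_le hq''le (by omega)
              apply Submodule.map_injective_of_injective p.injective_subtype
              rw [← hq'', heq]
              exact (Submodule.map_subtype_top p).symm
        have hmem : finrank ℂ p ∈
            {n : ℕ | 1 < n ∧ ∃ χ : G → ℂ, IsIrrChar G χ ∧ χ 1 = (n : ℂ)} := by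
          refine ⟨h2, (subFDRep V p hpinv).character, ⟨_, hsimple, rfl⟩, ?_⟩
          rw [FDRep.char_one, subFDRep_finrank V p hpinv]
        have hge : minDeg G ≤ finrank ℂ p := Nat.sInf_le hmem
        omega

/-- permutation representation on functions -/
def permρ (G : Type) [Group G] (α : Type) [MulAction G α] : Representation ℂ G (α → ℂ) where
  toFun g := LinearMap.funLeft ℂ ℂ (fun a => g⁻¹ • a)
  map_one' := by
    apply LinearMap.ext; intro f; funext a
    simp [LinearMap.funLeft_apply]
  map_mul' g h := by
    apply LinearMap.ext; intro f; funext a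
    simp [LinearMap.funLeft_apply, mul_smul, Module.End.mul_apply]

open Classical in
lemma permρ_char (G : Type) [Group G] (α : Type) [Fintype α] [MulAction G α] (g : G) :
    (FDRep.of (permρ G α)).character g
      = ((Finset.univ.filter fun a : α => g • a = a).card : ℂ) := by
  classical
  have h1 : (FDRep.of (permρ G α)).character g
      = LinearMap.trace ℂ (α → ℂ) (permρ G α g) := rfl
  rw [h1, LinearMap.trace_eq_matrix_trace ℂ (Pi.basisFun ℂ α), Matrix.trace]
  have h2 : ∀ a : α, (LinearMap.toMatrix (Pi.basisFun ℂ α) (Pi.basisFun ℂ α) (permρ G α g)).diag a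
      = if g • a = a then (1 : ℂ) else 0 := by
    intro a
    rw [Matrix.diag_apply, LinearMap.toMatrix_apply]
    have h3 : (permρ G α g) ((Pi.basisFun ℂ α) a) = fun b => (Pi.single a (1 : ℂ) : α → ℂ) (g⁻¹ • b) := by
      funext b
      simp [permρ, LinearMap.funLeft_apply, Pi.basisFun_apply]
    rw [h3]
    simp only [Pi.basisFun_repr]
    rw [Pi.single_apply]
    congr 1
    simp only [eq_iff_iff]
    constructor
    · intro h; rw [← h]; simp only [smul_inv_smul]; exact h.symm
    · intro h; rw [inv_smul_eq_iff]; exact h.symm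
  rw [Finset.sum_congr rfl (fun a _ => h2 a)]
  rw [Finset.sum_boole]

open Classical in
lemma count_fixed {G : Type} [Group G] (H : Subgroup G) [Fintype G] [Fintype (G ⧸ H)] (g : G) :
    (Finset.univ.filter fun x : G => x⁻¹ * g * x ∈ H).card
      = (Finset.univ.filter fun q : G ⧸ H => g • q = q).card * Nat.card H := by
  classical
  have key : ∀ x : G, (x⁻¹ * g * x ∈ H) ↔ g • (QuotientGroup.mk x : G ⧸ H) = QuotientGroup.mk x := by
    intro x
    rw [MulAction.Quotient.smul_mk, QuotientGroup.eq,
      show ((g • x : G))⁻¹ * x = (x⁻¹ * g * x)⁻¹ by rw [smul_eq_mul]; group, H.inv_mem_iff]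
  rw [Finset.card_eq_sum_card_fiberwise (f := fun x : G => (QuotientGroup.mk x : G ⧸ H))
    (t := Finset.univ.filter fun q : G ⧸ H => g • q = q)
    (fun x hx => by
      simp only [Finset.coe_filter, Finset.mem_filter, Finset.mem_univ, true_and, Set.mem_setOf_eq] at hx ⊢
      exact (key x).mp hx)]
  have hfiber : ∀ q ∈ Finset.univ.filter (fun q : G ⧸ H => g • q = q),
      ((Finset.univ.filter fun x : G => x⁻¹ * g * x ∈ H).filter
        (fun x => (QuotientGroup.mk x : G ⧸ H) = q)).card = Nat.card H := by
    intro q hq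
    simp only [Finset.mem_filter, Finset.mem_univ, true_and] at hq
    have hfil : (Finset.univ.filter fun x : G => x⁻¹ * g * x ∈ H).filter
        (fun x => (QuotientGroup.mk x : G ⧸ H) = q)
        = Finset.univ.filter (fun x : G => (QuotientGroup.mk x : G ⧸ H) = q) := by
      ext x
      simp only [Finset.mem_filter, Finset.mem_univ, true_and]
      constructor
      · rintro ⟨-, h⟩; exact h
      · intro h
        refine ⟨(key x).mpr ?_, h⟩
        rw [h, hq]
    rw [hfil]
    have e : H ≃ {x : G // (QuotientGroup.mk x : G ⧸ H) = q} :=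
      { toFun := fun h => ⟨q.out * h, by
          rw [QuotientGroup.mk_mul_of_mem _ h.2, QuotientGroup.out_eq']⟩
        invFun := fun x => ⟨q.out⁻¹ * x, by
          have hx : (QuotientGroup.mk q.out : G ⧸ H) = QuotientGroup.mk (x : G) := by
            rw [QuotientGroup.out_eq', x.2]
          exact QuotientGroup.eq.mp hx⟩
        left_inv := fun h => by
          ext; simp
        right_inv := fun x => by
          ext; simp }
    rw [← Fintype.card_subtype, ← Fintype.card_congr e, Nat.card_eq_fintype_card]
  rw [Finset.sum_congr rfl hfiber, Finset.sum_const, smul_eq_mul]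

lemma indChar_apply_one [Fintype G] (H : Subgroup G) (β : H → ℂ) :
    indChar H β 1 = (H.index : ℂ) * β 1 := by
  classical
  unfold indChar
  have hterm : ∀ x : G, (if h : x⁻¹ * 1 * x ∈ H then β ⟨x⁻¹ * 1 * x, h⟩ else 0) = β 1 := by
    intro x
    have hx : x⁻¹ * 1 * x = 1 := by group
    simp only [hx]
    exact dif_pos H.one_mem
  rw [Finset.sum_congr rfl (fun x _ => hterm x), Finset.sum_const, Finset.card_univ,
    nsmul_eq_mul]
  have hG : (Fintype.card G : ℂ) = (Nat.card H : ℂ) * (H.index : ℂ) := by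
    rw [← Nat.cast_mul, Subgroup.card_mul_index, Nat.card_eq_fintype_card]
  have hH : (Nat.card H : ℂ) ≠ 0 := Nat.cast_ne_zero.mpr Nat.card_pos.ne'
  rw [hG]
  field_simp

open Classical in
lemma indChar_triv_eq [Fintype G] (H : Subgroup G) [Fintype (G ⧸ H)] :
    indChar H (fun _ => (1 : ℂ)) = (FDRep.of (permρ G (G ⧸ H))).character := by
  classical
  funext g
  rw [permρ_char]
  unfold indChar
  simp only [dite_eq_ite]
  rw [Finset.sum_boole]
  rw [show (Finset.univ.filter fun x : G => x⁻¹ * g * x ∈ H).card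
    = (Finset.univ.filter fun q : G ⧸ H => g • q = q).card * Nat.card H from count_fixed H g]
  have hH : (Nat.card H : ℂ) ≠ 0 := Nat.cast_ne_zero.mpr Nat.card_pos.ne'
  push_cast
  rw [mul_comm ((Finset.univ.filter fun q : G ⧸ H => g • q = q).card : ℂ) (Nat.card H : ℂ),
    ← mul_assoc, inv_mul_cancel₀ hH, one_mul]
  congr 2
  ext x
  simp

lemma multiset_sum_apply_eq_card (s : Multiset (G → ℂ)) (g : G) (h : ∀ f ∈ s, f g = 1) :
    s.sum g = (Multiset.card s : ℂ) := by
  induction s using Multiset.induction_on with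
  | empty =>
    rw [Multiset.sum_zero]
    simp only [Multiset.card_zero, Nat.cast_zero]
    rfl
  | cons a t iht =>
    rw [Multiset.sum_cons]
    have ha : a g = 1 := h a (Multiset.mem_cons_self a t)
    have ht := iht (fun f hf => h f (Multiset.mem_cons_of_mem hf))
    rw [Pi.add_apply, ha, ht, Multiset.card_cons]
    push_cast
    ring

lemma linear_char_commutator (W : FDRep ℂ G) (h1 : W.character 1 = 1) {g : G}
    (hg : g ∈ commutator G) : W.character g = 1 := by
  have hrank : finrank ℂ W = 1 := by
    have h := FDRep.char_one W
    rw [h1] at h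
    exact_mod_cast h.symm
  set b := finBasisOfFinrankEq ℂ W hrank with hb
  set μ : G →* ℂ :=
    { toFun := fun x => LinearMap.toMatrix b b (W.ρ x) 0 0
      map_one' := by
        show LinearMap.toMatrix b b (W.ρ 1) 0 0 = 1
        rw [map_one, LinearMap.toMatrix_one, Matrix.one_apply_eq]
      map_mul' := fun x y => by
        show LinearMap.toMatrix b b (W.ρ (x * y)) 0 0
          = LinearMap.toMatrix b b (W.ρ x) 0 0 * LinearMap.toMatrix b b (W.ρ y) 0 0
        rw [map_mul, LinearMap.toMatrix_mul b, Matrix.mul_apply, Fin.sum_univ_one] } with hμ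
  have hchar : ∀ x : G, W.character x = μ x := by
    intro x
    show LinearMap.trace ℂ W (W.ρ x) = _
    rw [LinearMap.trace_eq_matrix_trace ℂ b, Matrix.trace, Fin.sum_univ_one]
    rfl
  have hco : commutator G ≤ μ.toHomUnits.ker := by
    rw [commutator_def]
    rw [Subgroup.commutator_le]
    intro a _ c _
    rw [MonoidHom.mem_ker, map_commutatorElement]
    exact commutatorElement_eq_one_iff_mul_comm.mpr (mul_comm _ _)
  have hg1 : μ.toHomUnits g = 1 := hco hg
  rw [hchar g, ← MonoidHom.coe_toHomUnits μ g, hg1, Units.val_one]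

open Classical in
lemma fixed_all {G : Type} [Group G] (α : Type) [Fintype α] [MulAction G α] (g : G)
    (h : (FDRep.of (permρ G α)).character g = (Fintype.card α : ℂ)) : ∀ a : α, g • a = a := by
  intro a
  have hA := permρ_char G α g
  have hcard : (Finset.univ.filter fun b : α => g • b = b).card = Fintype.card α := by
    exact_mod_cast (hA.symm.trans h)
  have huniv := Finset.eq_univ_of_card _ hcard
  have hmem : a ∈ Finset.univ.filter fun b : α => g • b = b := by rw [huniv]; exact Finset.mem_univ a
  simpa using (Finset.mem_filter.mp hmem).2


end AuxStmt19

/-- If `χ = β^G` is irreducible of degree `m(G)` with `β(1) > 1`, then `|G:H| < m(G)`,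
`(1_H)^G` is a sum of linear characters, and `G' ≤ H`. -/
theorem stmt19 (G : Type) [Group G] [Fintype G] (H : Subgroup G) (β : ↥H → ℂ)
    (hβ : IsChar ↥H β) (d : ℕ) (hd : β 1 = (d : ℂ)) (hd1 : 1 < d)
    (hirr : IsIrrChar G (indChar H β)) (hdeg : indChar H β 1 = (minDeg G : ℂ)) :
    H.index < minDeg G ∧ IsSumOfLinear G (indChar H (fun _ => 1)) ∧
      commutator G ≤ H := by
  classical
  haveI : Fintype (G ⧸ H) := Fintype.ofFinite _
  have h1 : indChar H β 1 = (H.index : ℂ) * β 1 := indChar_apply_one H β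
  rw [hdeg, hd] at h1
  have hnat : minDeg G = H.index * d := by
    have : ((minDeg G : ℕ) : ℂ) = ((H.index * d : ℕ) : ℂ) := by push_cast; rw [h1]
    exact_mod_cast this
  have hidx : H.index ≠ 0 := Subgroup.index_ne_zero_of_finite
  have part1 : H.index < minDeg G := by
    rw [hnat]
    exact (lt_mul_iff_one_lt_right (Nat.pos_of_ne_zero hidx)).mpr hd1
  have hfr : Module.finrank ℂ (FDRep.of (permρ G (G ⧸ H))) = H.index := by
    show Module.finrank ℂ (G ⧸ H → ℂ) = H.index
    rw [Module.finrank_fintype_fun_eq_card, ← Nat.card_eq_fintype_card]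
    exact (Subgroup.index_eq_card H).symm
  have part2 : IsSumOfLinear G (indChar H (fun _ => 1)) := by
    rw [indChar_triv_eq H]
    exact sumLinearAux _ (FDRep.of (permρ G (G ⧸ H))) hfr (hfr ▸ part1)
  refine ⟨part1, part2, ?_⟩
  intro g hg
  obtain ⟨s, hs, hsum⟩ := part2
  have hχg : indChar H (fun _ => (1 : ℂ)) g = (Multiset.card s : ℂ) := by
    rw [hsum]
    refine multiset_sum_apply_eq_card s g (fun f hf => ?_)
    obtain ⟨⟨W, hW⟩, hf1⟩ := hs f hf
    subst hW
    exact linear_char_commutator W hf1 hg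
  have hχ1 : indChar H (fun _ => (1 : ℂ)) 1 = (Multiset.card s : ℂ) := by
    rw [hsum]
    exact multiset_sum_apply_eq_card s 1 (fun f hf => (hs f hf).2)
  have hχ1' : indChar H (fun _ => (1 : ℂ)) 1 = (H.index : ℂ) := by
    rw [indChar_apply_one H _, mul_one]
  have hcards : (Multiset.card s : ℂ) = (H.index : ℂ) := by rw [← hχ1, hχ1']
  have hcharval : (FDRep.of (permρ G (G ⧸ H))).character g = (Fintype.card (G ⧸ H) : ℂ) := by
    rw [← congrFun (indChar_triv_eq H) g, hχg, hcards]
    rw [Subgroup.index_eq_card, Nat.card_eq_fintype_card]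
  have hfix := fixed_all (G ⧸ H) g hcharval (QuotientGroup.mk (1 : G))
  rw [MulAction.Quotient.smul_mk] at hfix
  have hmem := QuotientGroup.eq.mp hfix
  simp only [smul_eq_mul, mul_one, mul_inv_rev, inv_one, one_mul] at hmem
  exact H.inv_mem_iff.mp (by simpa using hmem)

end
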